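/- arXiv:1603.06813 — 3 statements merged into one kernel-verified Lean document; each statement's English description precedes it below -/
import Mathlib

section
/- Let m ≥ 1 be an integer and let 0 ≤ l ≤ 2m. For all a, b, c, d, u, w ∈ ℂ the following identity holds. Write (a + b·t)^{2m−l}·(c + d·t)^{l} = ∑_{j=0}^{2m} c_j·t^j as a polynomial in t. Then ∑_{j=0}^{2m} c_j·C(2m,j)^{−1}·∑_{l₁} C(m,l₁)·C(m,j−l₁)·u^{l₁}·w^{j−l₁} = C(2m,l)^{−1}·∑_{l₁} C(m,l₁)·C(m,l−l₁)·(a + b·u)^{m−l₁}·(c + d·u)^{l₁}·(a + b·w)^{m−l+l₁}·(c + d·w)^{l−l₁}, where both inner sums run over all integers l₁ and C(p,q) denotes the binomial coefficient with the convention C(p,q) = 0 whenever q < 0 or q > p (so that all exponents appearing with nonzero coefficient are nonnegative). -/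
open Polynomial

theorem coeff_linear_pow (α β : ℂ) (n j : ℕ) :
    ((Polynomial.C α + Polynomial.C β * X)^n).coeff j = (n.choose j : ℂ) * α^(n-j) * β^j := by
  rw [add_comm (Polynomial.C α), add_pow]
  have h : ∀ b : ℕ, (Polynomial.C β * Polynomial.X) ^ b * Polynomial.C α ^ (n - b) * (n.choose b : ℂ[X])
      = Polynomial.C ((n.choose b : ℂ) * α^(n-b) * β^b) * Polynomial.X ^ b := by
    intro b
    simp only [mul_pow, C_mul, C_pow, map_natCast]
    ring
  simp only [h, finset_sum_coeff, coeff_C_mul, coeff_X_pow, mul_ite, mul_one, mul_zero]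
  rw [Finset.sum_ite_eq (Finset.range (n+1))]
  split
  · rfl
  · rename_i hmem
    rw [Finset.mem_range, not_lt] at hmem
    rw [Nat.choose_eq_zero_of_lt (by omega)]
    push_cast; ring

theorem shift_sum (f : ℕ → ℂ) (k n : ℕ) :
    ∑ j ∈ Finset.range n, (if k ≤ j then f (j - k) else 0) = ∑ i ∈ Finset.range (n - k), f i := by
  rw [Finset.sum_ite, Finset.sum_const_zero, add_zero]
  have h : Finset.filter (fun j => k ≤ j) (Finset.range n) = Finset.Ico k n := by
    ext x; simp [Finset.mem_Ico, and_comm]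
  rw [h, Finset.sum_Ico_eq_sum_range]
  simp

theorem key3 (m : ℕ) (x1 x2 u w : ℂ) :
    (∑ j ∈ Finset.range (2*m+1), x1^(2*m-j) * x2^j *
      ∑ l₁ ∈ Finset.range (m+1),
        (if l₁ ≤ j then (m.choose l₁:ℂ)*(m.choose (j-l₁):ℂ) * u^l₁ * w^(j-l₁) else 0))
    = (x1 + x2*u)^m * (x1 + x2*w)^m := by
  set g : ℕ → ℕ → ℂ := fun p j => (m.choose p : ℂ) * (m.choose (j - p) : ℂ) * u^p * w^(j-p)
      * (x1^(2*m-j) * x2^j) with hg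
  have step1 : (∑ j ∈ Finset.range (2*m+1), x1^(2*m-j) * x2^j *
      ∑ l₁ ∈ Finset.range (m+1),
        (if l₁ ≤ j then (m.choose l₁:ℂ)*(m.choose (j-l₁):ℂ) * u^l₁ * w^(j-l₁) else 0))
      = ∑ l₁ ∈ Finset.range (m+1), ∑ j ∈ Finset.range (2*m+1),
          (if l₁ ≤ j then g l₁ j else 0) := by
    rw [Finset.sum_comm]
    apply Finset.sum_congr rfl; intro j _
    rw [Finset.mul_sum]
    apply Finset.sum_congr rfl; intro l₁ _
    rw [mul_ite, mul_zero]
    split_ifs with h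
    · simp only [hg]; ring
    · rfl
  rw [step1]
  have step2 : ∀ l₁ ∈ Finset.range (m+1),
      ∑ j ∈ Finset.range (2*m+1), (if l₁ ≤ j then g l₁ j else 0)
      = ∑ l₂ ∈ Finset.range (m+1), g l₁ (l₁ + l₂) := by
    intro l₁ hl₁
    rw [Finset.mem_range] at hl₁
    have e1 : ∀ j ∈ Finset.range (2*m+1), (if l₁ ≤ j then g l₁ j else 0)
        = (if l₁ ≤ j then g l₁ (l₁ + (j - l₁)) else 0) := by
      intro j _
      split_ifs with h
      · rw [Nat.add_sub_cancel' h]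
      · rfl
    rw [Finset.sum_congr rfl e1,
      shift_sum (fun i => g l₁ (l₁ + i)) l₁ (2*m+1)]
    symm
    apply Finset.sum_subset
    · apply Finset.range_subset_range.2; omega
    · intro x _ hx
      rw [Finset.mem_range, not_lt] at hx
      simp only [hg, Nat.add_sub_cancel_left]
      rw [Nat.choose_eq_zero_of_lt (show m < x by omega)]
      push_cast; ring
  rw [Finset.sum_congr rfl step2]
  have hx : ∀ (v : ℂ), (x1 + x2*v)^m
      = ∑ k ∈ Finset.range (m+1), (m.choose k : ℂ) * x1^(m-k) * (x2^k * v^k) := by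
    intro v; rw [add_comm x1, add_pow]
    apply Finset.sum_congr rfl; intro k hk
    rw [mul_pow]; ring
  rw [hx u, hx w, Finset.sum_mul_sum]
  apply Finset.sum_congr rfl; intro l₁ hl₁
  apply Finset.sum_congr rfl; intro l₂ hl₂
  rw [Finset.mem_range] at hl₁ hl₂
  simp only [hg, Nat.add_sub_cancel_left]
  have e2 : 2*m - (l₁ + l₂) = (m - l₁) + (m - l₂) := by omega
  rw [e2, pow_add, pow_add]
  ring

theorem hpoly_lemma (m : ℕ) (a b c d s : ℂ) (j : ℕ) :
    ∑ k ∈ Finset.range (2*m+1), (((2*m).choose k : ℂ) * s^k) *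
        ((Polynomial.C a + Polynomial.C b * X)^(2*m-k) *
         (Polynomial.C c + Polynomial.C d * X)^k).coeff j
    = ((2*m).choose j : ℂ) * (a+s*c)^(2*m-j) * (b+s*d)^j := by
  have hp : (Polynomial.C (a+s*c) + Polynomial.C (b+s*d) * X)^(2*m)
      = ∑ k ∈ Finset.range (2*m+1), Polynomial.C (((2*m).choose k : ℂ) * s^k) *
          ((Polynomial.C a + Polynomial.C b * X)^(2*m-k) *
           (Polynomial.C c + Polynomial.C d * X)^k) := by
    have e : Polynomial.C (a+s*c) + Polynomial.C (b+s*d) * X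
        = Polynomial.C s * (Polynomial.C c + Polynomial.C d * X)
          + (Polynomial.C a + Polynomial.C b * X) := by
      simp only [C_add, C_mul]; ring
    rw [e, add_pow]
    apply Finset.sum_congr rfl; intro k hk
    simp only [mul_pow, C_mul, C_pow, C_eq_natCast]
    ring
  have h2 := congrArg (fun q : ℂ[X] => q.coeff j) hp
  simp only [finset_sum_coeff, coeff_C_mul, coeff_linear_pow] at h2
  exact h2.symm

noncomputable def Kf (m : ℕ) (u w : ℂ) (j : ℕ) : ℂ :=
  ∑ l₁ ∈ Finset.range (m+1),
    if l₁ ≤ j then (m.choose l₁ : ℂ) * (m.choose (j - l₁) : ℂ) * u ^ l₁ * w ^ (j - l₁) else 0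

noncomputable def Lf (m : ℕ) (a b c d u w : ℂ) (k : ℕ) : ℂ :=
  ∑ j ∈ Finset.range (2*m+1),
    ((Polynomial.C a + Polynomial.C b * X)^(2*m-k) *
     (Polynomial.C c + Polynomial.C d * X)^k).coeff j * (((2*m).choose j : ℂ))⁻¹ * Kf m u w j

noncomputable def Sf (m l : ℕ) (a b c d u w : ℂ) : ℂ :=
  ∑ l₁ ∈ Finset.range (m+1),
    if l₁ ≤ l then (m.choose l₁ : ℂ) * (m.choose (l - l₁) : ℂ) *
      (a + b*u)^(m-l₁) * (c + d*u)^l₁ * (a + b*w)^(m+l₁-l) * (c + d*w)^(l-l₁) else 0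

theorem main_key (m l : ℕ) (hl : l ≤ 2*m) (a b c d u w : ℂ) :
    ((2*m).choose l : ℂ) * Lf m a b c d u w l = Sf m l a b c d u w := by
  set G : ℂ[X] := ∑ k ∈ Finset.range (2*m+1),
      Polynomial.C (((2*m).choose k : ℂ) * Lf m a b c d u w k) * X^k with hG
  set F : ℂ[X] := (Polynomial.C (a+b*u) + Polynomial.C (c+d*u) * X)^m *
      (Polynomial.C (a+b*w) + Polynomial.C (c+d*w) * X)^m with hF
  have hGF : G = F := by
    apply Polynomial.funext
    intro s
    have hevalG : G.eval s = ∑ k ∈ Finset.range (2*m+1),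
        (((2*m).choose k : ℂ) * Lf m a b c d u w k) * s^k := by
      rw [hG, Polynomial.eval_finset_sum]; simp
    have hevalF : F.eval s = ((a+b*u) + (c+d*u)*s)^m * ((a+b*w) + (c+d*w)*s)^m := by
      rw [hF]; simp
    rw [hevalG, hevalF]
    calc ∑ k ∈ Finset.range (2*m+1), (((2*m).choose k : ℂ) * Lf m a b c d u w k) * s^k
        = ∑ k ∈ Finset.range (2*m+1), ∑ j ∈ Finset.range (2*m+1),
            ((((2*m).choose k : ℂ) * s^k) *
              ((Polynomial.C a + Polynomial.C b * X)^(2*m-k) *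
               (Polynomial.C c + Polynomial.C d * X)^k).coeff j) *
            ((((2*m).choose j : ℂ))⁻¹ * Kf m u w j) := by
          apply Finset.sum_congr rfl; intro k _
          rw [Lf, Finset.mul_sum, Finset.sum_mul]
          apply Finset.sum_congr rfl; intro j _; ring
      _ = ∑ j ∈ Finset.range (2*m+1),
            (∑ k ∈ Finset.range (2*m+1), (((2*m).choose k : ℂ) * s^k) *
              ((Polynomial.C a + Polynomial.C b * X)^(2*m-k) *
               (Polynomial.C c + Polynomial.C d * X)^k).coeff j) *
            ((((2*m).choose j : ℂ))⁻¹ * Kf m u w j) := by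
          rw [Finset.sum_comm]
          apply Finset.sum_congr rfl; intro j _
          rw [Finset.sum_mul]
      _ = ∑ j ∈ Finset.range (2*m+1), (a+s*c)^(2*m-j) * (b+s*d)^j * Kf m u w j := by
          apply Finset.sum_congr rfl; intro j hj
          rw [hpoly_lemma]
          rw [Finset.mem_range] at hj
          have hne : ((2*m).choose j : ℂ) ≠ 0 :=
            Nat.cast_ne_zero.2 (Nat.choose_pos (by omega)).ne'
          field_simp
      _ = ((a+s*c) + (b+s*d)*u)^m * ((a+s*c) + (b+s*d)*w)^m := by
          simp only [Kf]
          exact key3 m (a+s*c) (b+s*d) u w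
      _ = ((a+b*u) + (c+d*u)*s)^m * ((a+b*w) + (c+d*w)*s)^m := by ring
  have hGl : G.coeff l = ((2*m).choose l : ℂ) * Lf m a b c d u w l := by
    rw [hG]
    simp only [finset_sum_coeff, coeff_C_mul, coeff_X_pow, mul_ite, mul_one, mul_zero]
    rw [Finset.sum_ite_eq (Finset.range (2*m+1)) l]
    rw [if_pos (Finset.mem_range.2 (by omega))]
  have hFl : F.coeff l = Sf m l a b c d u w := by
    rw [hF, Polynomial.coeff_mul, Finset.Nat.sum_antidiagonal_eq_sum_range_succ_mk]
    simp only [coeff_linear_pow, Sf]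
    rcases le_or_gt l m with hlm | hlm
    · rw [show ∑ l₁ ∈ Finset.range (m+1),
          (if l₁ ≤ l then (m.choose l₁ : ℂ) * (m.choose (l - l₁) : ℂ) *
            (a + b*u)^(m-l₁) * (c + d*u)^l₁ * (a + b*w)^(m+l₁-l) * (c + d*w)^(l-l₁) else 0)
          = ∑ l₁ ∈ Finset.range (l+1),
          (if l₁ ≤ l then (m.choose l₁ : ℂ) * (m.choose (l - l₁) : ℂ) *
            (a + b*u)^(m-l₁) * (c + d*u)^l₁ * (a + b*w)^(m+l₁-l) * (c + d*w)^(l-l₁) else 0)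
          from (Finset.sum_subset (Finset.range_subset_range.2 (by omega))
            (fun x _ hx => by rw [Finset.mem_range] at hx; rw [if_neg (by omega)])).symm]
      apply Finset.sum_congr rfl
      intro k hk
      rw [Finset.mem_range] at hk
      rw [if_pos (by omega : k ≤ l), show m + k - l = m - (l - k) by omega]
      ring
    · rw [show ∑ k ∈ Finset.range (l+1),
          ((m.choose k : ℂ) * (a + b*u)^(m-k) * (c + d*u)^k) *
          ((m.choose (l-k) : ℂ) * (a + b*w)^(m-(l-k)) * (c + d*w)^(l-k))
          = ∑ k ∈ Finset.range (m+1),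
          ((m.choose k : ℂ) * (a + b*u)^(m-k) * (c + d*u)^k) *
          ((m.choose (l-k) : ℂ) * (a + b*w)^(m-(l-k)) * (c + d*w)^(l-k))
          from (Finset.sum_subset (Finset.range_subset_range.2 (by omega))
            (fun x _ hx => by
              rw [Finset.mem_range] at hx
              rw [Nat.choose_eq_zero_of_lt (show m < x by omega)]
              push_cast; ring)).symm]
      apply Finset.sum_congr rfl
      intro k hk
      rw [Finset.mem_range] at hk
      rw [if_pos (by omega : k ≤ l), show m + k - l = m - (l - k) by omega]
      ring
  rw [← hGl, hGF, hFl]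

theorem stmt_4 (m : ℕ) (hm : 1 ≤ m) (l : ℕ) (hl : l ≤ 2 * m) (a b c d u w : ℂ) :
    (∑ j ∈ Finset.range (2 * m + 1),
        ((Polynomial.C a + Polynomial.C b * Polynomial.X) ^ (2 * m - l) *
            (Polynomial.C c + Polynomial.C d * Polynomial.X) ^ l).coeff j *
          (((2 * m).choose j : ℂ))⁻¹ *
          ∑ l₁ ∈ Finset.range (m + 1),
            if l₁ ≤ j then
              (m.choose l₁ : ℂ) * (m.choose (j - l₁) : ℂ) * u ^ l₁ * w ^ (j - l₁)
            else 0) =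
      (((2 * m).choose l : ℂ))⁻¹ *
        ∑ l₁ ∈ Finset.range (m + 1),
          if l₁ ≤ l then
            (m.choose l₁ : ℂ) * (m.choose (l - l₁) : ℂ) *
              (a + b * u) ^ (m - l₁) * (c + d * u) ^ l₁ *
              (a + b * w) ^ (m + l₁ - l) * (c + d * w) ^ (l - l₁)
          else 0 := by
  have hne : ((2 * m).choose l : ℂ) ≠ 0 := Nat.cast_ne_zero.2 (Nat.choose_pos hl).ne'
  have key := main_key m l hl a b c d u w
  show Lf m a b c d u w l = ((2 * m).choose l : ℂ)⁻¹ * Sf m l a b c d u w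
  rw [← key, inv_mul_cancel_left₀ hne]
end

section
/- Let m ≥ 1 be an integer, let ϱ, w ∈ ℂ, and let 0 ≤ l ≤ 2m. Set L(t) = (1 + conj(ϱ)·t)/(1 + |ϱ|²)^{1/2} and M(t) = (t − ϱ)/(1 + |ϱ|²)^{1/2}. Write L(t)^{2m−l}·M(t)^{l} = ∑_{j=0}^{2m} c_j·t^j as a polynomial in t, and set F(w) = ∑_{j=0}^{2m} c_j·C(2m,j)^{−1}·∑_{l₁} C(m,l₁)·C(m,j−l₁)·ϱ^{l₁}·w^{j−l₁} (inner sum over all integers l₁, with the convention C(p,q) = 0 for q < 0 or q > p). Then: if 0 ≤ l ≤ m, F(w) = C(2m,l)^{−1}·C(m,l)·(1 + |ϱ|²)^{m/2}·L(w)^{m−l}·M(w)^{l}; and if m < l ≤ 2m, F(w) = 0. -/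
open Polynomial

lemma coeff_lin_pow (a b : ℂ) (n k : ℕ) :
    ((Polynomial.C a + Polynomial.C b * Polynomial.X) ^ n).coeff k
      = (n.choose k : ℂ) * a ^ (n - k) * b ^ k := by
  by_cases hb : b = 0
  · subst hb
    simp only [Polynomial.C_0, zero_mul, add_zero, ← Polynomial.C_pow, Polynomial.coeff_C]
    rcases Nat.eq_zero_or_pos k with hk | hk
    · simp [hk]
    · simp [hk.ne', zero_pow hk.ne']
  · have : Polynomial.C a + Polynomial.C b * Polynomial.X
        = Polynomial.C b * (Polynomial.X + Polynomial.C (a / b)) := by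
      rw [mul_add, ← Polynomial.C_mul, mul_div_cancel₀ _ hb, mul_comm, add_comm]
    rw [this, mul_pow, ← Polynomial.C_pow, Polynomial.coeff_C_mul,
      Polynomial.coeff_X_add_C_pow]
    rcases le_or_gt k n with h | h
    · rw [div_pow]
      have hbk : b ^ (n - k) * b ^ k = b ^ n := by rw [← pow_add, Nat.sub_add_cancel h]
      field_simp
      rw [mul_comm (b ^ n), mul_assoc, mul_assoc, ← hbk]
      ring
    · simp [Nat.choose_eq_zero_of_lt h]

lemma lemA (m : ℕ) (α β x y : ℂ) :
    ∑ j ∈ Finset.range (2*m+1), (α^(2*m-j) * β^j *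
      ∑ l₁ ∈ Finset.range (m+1), if l₁ ≤ j then
        (m.choose l₁ : ℂ) * (m.choose (j-l₁) : ℂ) * x^l₁ * y^(j-l₁) else 0)
    = (α + β*x)^m * (α + β*y)^m := by
  have rhs : (α + β*x)^m * (α + β*y)^m
      = ∑ a ∈ Finset.range (m+1), ∑ b ∈ Finset.range (m+1),
          ((β*x)^a * α^(m-a) * (m.choose a : ℂ)) * ((β*y)^b * α^(m-b) * (m.choose b : ℂ)) := by
    rw [add_comm α (β*x), add_comm α (β*y), add_pow, add_pow, Finset.sum_mul_sum]
  rw [rhs]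
  simp only [Finset.mul_sum, mul_ite, mul_zero]
  rw [Finset.sum_comm]
  refine Finset.sum_congr rfl fun l₁ hl₁ => ?_
  rw [← Finset.sum_filter]
  have hfil : (Finset.range (2*m+1)).filter (fun j => l₁ ≤ j) = Finset.Ico l₁ (2*m+1) := by
    ext j; simp [Nat.lt_succ]; omega
  rw [hfil, Finset.sum_Ico_eq_sum_range]
  have hl₁m : l₁ ≤ m := by simpa [Nat.lt_succ] using hl₁
  have hsub : Finset.range (m+1) ⊆ Finset.range (2*m+1-l₁) := by
    apply Finset.range_subset_range.mpr; omega
  rw [← Finset.sum_subset hsub (fun i _ hi => by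
    have : m < i := by simpa [Nat.lt_succ] using hi
    simp [Nat.choose_eq_zero_of_lt this])]
  refine Finset.sum_congr rfl fun i hi => ?_
  have him : i ≤ m := by simpa [Nat.lt_succ] using hi
  have h1 : l₁ + i - l₁ = i := by omega
  have h2 : 2*m - (l₁+i) = (m - l₁) + (m - i) := by omega
  rw [h1, h2, pow_add, pow_add, mul_pow, mul_pow]
  ring

lemma claimB (n : ℕ) (u v p q : ℂ) (j l : ℕ) (hl : l ≤ n) :
    (n.choose l : ℂ) *
      ((Polynomial.C p + Polynomial.C q * Polynomial.X)^l *
        (Polynomial.C u + Polynomial.C v * Polynomial.X)^(n-l)).coeff j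
    = (n.choose j : ℂ) *
      ((Polynomial.C u + Polynomial.C p * Polynomial.X)^(n-j) *
        (Polynomial.C v + Polynomial.C q * Polynomial.X)^j).coeff l := by
  set A : Polynomial ℂ := Polynomial.C u + Polynomial.C v * Polynomial.X with hA
  set B : Polynomial ℂ := Polynomial.C p + Polynomial.C q * Polynomial.X with hB
  set P₁ : Polynomial ℂ := ∑ k ∈ Finset.range (n+1),
      Polynomial.C (((B^k * A^(n-k)).coeff j) * (n.choose k : ℂ)) * Polynomial.X^k with hP₁
  set P₂ : Polynomial ℂ := Polynomial.C ((n.choose j : ℂ)) *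
      ((Polynomial.C u + Polynomial.C p * Polynomial.X)^(n-j) *
        (Polynomial.C v + Polynomial.C q * Polynomial.X)^j) with hP₂
  have hfun : P₁ = P₂ := by
    apply Polynomial.funext
    intro t
    have e1 : P₁.eval t = ((Polynomial.C t * B + A)^n).coeff j := by
      rw [add_pow, Polynomial.finset_sum_coeff, hP₁, Polynomial.eval_finset_sum]
      refine Finset.sum_congr rfl fun k _ => ?_
      have e : (Polynomial.C t * B)^k * A^(n-k) * ((n.choose k : ℕ) : ℂ[X])
          = Polynomial.C (t^k * (n.choose k : ℂ)) * (B^k * A^(n-k)) := by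
        rw [mul_pow, ← Polynomial.C_pow, ← Polynomial.C_eq_natCast, Polynomial.C_mul]
        ring
      rw [e, Polynomial.coeff_C_mul]
      simp only [Polynomial.eval_mul, Polynomial.eval_C, Polynomial.eval_pow,
        Polynomial.eval_X]
      ring
    have e2 : Polynomial.C t * B + A
        = Polynomial.C (u + t*p) + Polynomial.C (v + t*q) * Polynomial.X := by
      rw [hA, hB]
      simp only [Polynomial.C_add, Polynomial.C_mul]
      ring
    rw [e1, e2, coeff_lin_pow, hP₂]
    simp only [Polynomial.eval_mul, Polynomial.eval_C, Polynomial.eval_pow,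
      Polynomial.eval_add, Polynomial.eval_X]
    ring
  have c1 : P₁.coeff l = ((B^l * A^(n-l)).coeff j) * (n.choose l : ℂ) := by
    rw [hP₁, Polynomial.finset_sum_coeff]
    rw [Finset.sum_eq_single l]
    · rw [Polynomial.coeff_C_mul, Polynomial.coeff_X_pow, if_pos rfl, mul_one]
    · intro k _ hk
      rw [Polynomial.coeff_C_mul, Polynomial.coeff_X_pow, if_neg (Ne.symm hk), mul_zero]
    · intro h
      exact absurd (Finset.mem_range.mpr (Nat.lt_succ_of_le hl)) h
  have c2 : P₂.coeff l = (n.choose j : ℂ) *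
      ((Polynomial.C u + Polynomial.C p * Polynomial.X)^(n-j) *
        (Polynomial.C v + Polynomial.C q * Polynomial.X)^j).coeff l := by
    rw [hP₂, Polynomial.coeff_C_mul]
  rw [← c2, ← hfun, c1]; ring


/-- The normalizing factor `(1 + |ϱ|²)^{1/2}` as a complex number. -/
noncomputable def sρ (ϱ : ℂ) : ℂ := (Real.sqrt (1 + ‖ϱ‖ ^ 2) : ℂ)

/-- `L(t) = (1 + conj(ϱ)·t) / (1 + |ϱ|²)^{1/2}`. -/
noncomputable def Lfun (ϱ t : ℂ) : ℂ := (1 + (starRingEnd ℂ) ϱ * t) / sρ ϱ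

/-- `M(t) = (t − ϱ) / (1 + |ϱ|²)^{1/2}`. -/
noncomputable def Mfun (ϱ t : ℂ) : ℂ := (t - ϱ) / sρ ϱ

/-- The polynomial `L(X)^{2m−l}·M(X)^{l}`, whose coefficients are the `c_j`. -/
noncomputable def Ppoly (m l : ℕ) (ϱ : ℂ) : Polynomial ℂ :=
  (Polynomial.C (1 / sρ ϱ) + Polynomial.C ((starRingEnd ℂ) ϱ / sρ ϱ) * Polynomial.X) ^
      (2 * m - l) *
    (Polynomial.C (-ϱ / sρ ϱ) + Polynomial.C (1 / sρ ϱ) * Polynomial.X) ^ l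

/-- `F(w) = ∑_{j=0}^{2m} c_j·C(2m,j)^{−1}·∑_{l₁} C(m,l₁)·C(m,j−l₁)·ϱ^{l₁}·w^{j−l₁}`. -/
noncomputable def Ffun (m l : ℕ) (ϱ w : ℂ) : ℂ :=
  ∑ j ∈ Finset.range (2 * m + 1),
    (Ppoly m l ϱ).coeff j * (((2 * m).choose j : ℂ))⁻¹ *
      ∑ l₁ ∈ Finset.range (m + 1),
        if l₁ ≤ j then
          (m.choose l₁ : ℂ) * (m.choose (j - l₁) : ℂ) * ϱ ^ l₁ * w ^ (j - l₁)
        else 0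

theorem stmt_5 (m : ℕ) (hm : 1 ≤ m) (l : ℕ) (hl : l ≤ 2 * m) (ϱ w : ℂ) :
    (l ≤ m →
      Ffun m l ϱ w =
        (((2 * m).choose l : ℂ))⁻¹ * (m.choose l : ℂ) *
          (((1 + ‖ϱ‖ ^ 2 : ℝ) ^ ((m : ℝ) / 2) : ℝ) : ℂ) *
          Lfun ϱ w ^ (m - l) * Mfun ϱ w ^ l) ∧
    (m < l → Ffun m l ϱ w = 0) := by
  set r : ℝ := 1 + ‖ϱ‖ ^ 2 with hr
  have hr0 : (0:ℝ) < r := by positivity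
  set s : ℂ := sρ ϱ with hs
  have hs0 : s ≠ 0 := by
    simp only [hs, sρ, Complex.ofReal_ne_zero]
    exact (Real.sqrt_pos.mpr hr0).ne'
  have hss : s * s = (r : ℂ) := by
    rw [hs, sρ, ← Complex.ofReal_mul, Real.mul_self_sqrt hr0.le]
  set u : ℂ := 1 / s with hu
  set v : ℂ := (starRingEnd ℂ) ϱ / s with hv
  set p : ℂ := -ϱ / s with hp
  set q : ℂ := 1 / s with hq
  have hpq : p + q * ϱ = 0 := by rw [hp, hq]; ring
  have hconj : (1:ℂ) + (starRingEnd ℂ) ϱ * ϱ = s * s := by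
    rw [hss, hr, mul_comm ((starRingEnd ℂ) ϱ) ϱ, Complex.mul_conj, ← Complex.sq_norm]
    push_cast
    ring
  have huv : u + v * ϱ = s := by
    have : u + v * ϱ = ((1:ℂ) + (starRingEnd ℂ) ϱ * ϱ) / s := by
      rw [hu, hv]; ring
    rw [this, hconj, mul_div_assoc, div_self hs0, mul_one]
  have hL : u + v * w = Lfun ϱ w := by rw [Lfun, hu, hv]; ring
  have hM : p + q * w = Mfun ϱ w := by rw [Mfun, hp, hq]; ring
  -- the two polynomials
  set inner : ℕ → ℂ := fun j => ∑ l₁ ∈ Finset.range (m + 1),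
        if l₁ ≤ j then
          (m.choose l₁ : ℂ) * (m.choose (j - l₁) : ℂ) * ϱ ^ l₁ * w ^ (j - l₁)
        else 0 with hinner
  set Q₁ : Polynomial ℂ := ∑ j ∈ Finset.range (2*m+1),
      Polynomial.C (inner j) *
        ((Polynomial.C u + Polynomial.C p * Polynomial.X)^(2*m-j) *
         (Polynomial.C v + Polynomial.C q * Polynomial.X)^j) with hQ₁
  set Q₂ : Polynomial ℂ :=
      (Polynomial.C (u + v*ϱ) + Polynomial.C (p + q*ϱ) * Polynomial.X)^m *
      (Polynomial.C (u + v*w) + Polynomial.C (p + q*w) * Polynomial.X)^m with hQ₂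
  have hQeq : Q₁ = Q₂ := by
    apply Polynomial.funext
    intro t
    have e1 : Q₁.eval t = ∑ j ∈ Finset.range (2*m+1),
        ((u + t*p)^(2*m-j) * (v + t*q)^j * inner j) := by
      rw [hQ₁, Polynomial.eval_finset_sum]
      refine Finset.sum_congr rfl fun j _ => ?_
      simp only [Polynomial.eval_mul, Polynomial.eval_C, Polynomial.eval_pow,
        Polynomial.eval_add, Polynomial.eval_X]
      ring
    rw [e1]
    have := lemA m (u + t*p) (v + t*q) ϱ w
    rw [hinner]
    rw [this]
    simp only [hQ₂, Polynomial.eval_mul, Polynomial.eval_C, Polynomial.eval_pow,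
      Polynomial.eval_add, Polynomial.eval_X]
    ring
  -- coefficient l of Q₁
  have hchoosel : ((2*m).choose l : ℂ) ≠ 0 := by
    exact_mod_cast (Nat.choose_pos hl).ne'
  have c1 : Q₁.coeff l = ((2*m).choose l : ℂ) * Ffun m l ϱ w := by
    rw [hQ₁, Polynomial.finset_sum_coeff, Ffun, Finset.mul_sum]
    refine Finset.sum_congr rfl fun j hj => ?_
    have hj2m : j ≤ 2*m := by
      have := Finset.mem_range.mp hj; omega
    have hchoosej : ((2*m).choose j : ℂ) ≠ 0 := by
      exact_mod_cast (Nat.choose_pos hj2m).ne'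
    have hB := claimB (2*m) u v p q j l hl
    have hPc : (Ppoly m l ϱ).coeff j
        = ((Polynomial.C p + Polynomial.C q * Polynomial.X)^l *
           (Polynomial.C u + Polynomial.C v * Polynomial.X)^(2*m-l)).coeff j := by
      rw [Ppoly, mul_comm]
    rw [Polynomial.coeff_C_mul]
    have hc : ((Polynomial.C u + Polynomial.C p * Polynomial.X)^(2*m-j) *
         (Polynomial.C v + Polynomial.C q * Polynomial.X)^j).coeff l
        = (((2*m).choose j : ℂ))⁻¹ * (((2*m).choose l : ℂ) * (Ppoly m l ϱ).coeff j) := by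
      rw [hPc, hB, inv_mul_cancel_left₀ hchoosej]
    rw [hc]
    simp only [hinner]
    ring
  -- coefficient l of Q₂
  have c2 : Q₂.coeff l = s^m * ((m.choose l : ℂ) * (Lfun ϱ w)^(m-l) * (Mfun ϱ w)^l) := by
    rw [hQ₂, hpq, huv, hL, hM]
    have : (Polynomial.C s + Polynomial.C (0:ℂ) * Polynomial.X)^m
        = Polynomial.C (s^m) := by
      rw [Polynomial.C_0, zero_mul, add_zero, ← Polynomial.C_pow]
    rw [this, Polynomial.coeff_C_mul, coeff_lin_pow]
  have key : Ffun m l ϱ w = (((2*m).choose l : ℂ))⁻¹ * s^m *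
      ((m.choose l : ℂ) * (Lfun ϱ w)^(m-l) * (Mfun ϱ w)^l) := by
    have h := c1.symm.trans ((congrArg (fun P => P.coeff l) hQeq).trans c2)
    rw [mul_assoc, ← h, inv_mul_cancel_left₀ hchoosel]
  have hsm : s^m = ((r ^ ((m : ℝ) / 2) : ℝ) : ℂ) := by
    rw [hs, sρ, ← hr, ← Complex.ofReal_pow]
    congr 1
    rw [Real.sqrt_eq_rpow, ← Real.rpow_natCast (r ^ (1/(2:ℝ))) m, ← Real.rpow_mul hr0.le]
    congr 1
    ring
  constructor
  · intro _
    rw [key, hsm]; ring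
  · intro hml
    rw [key, Nat.choose_eq_zero_of_lt hml]
    simp
end

section
/- For every integer n ≥ 2 there exist real numbers r₁, ρ₆ ∈ (0,1) such that for every integer m ≥ 1, every pair of distinct n-th roots of unity ζ ≠ ζ′, and all u, t ∈ ℂ with |u − ζ| < r₁, |t − ζ′| < r₁ and |t − u| ≤ 2·|1 + conj(u)·t|, one has |∑_{l=0}^{m} b_{m,l} u^{−l} t^{l}| < ρ₆^m. -/
set_option maxHeartbeats 1000000

/-- `b_{m,l} = C(m,l)^2 / C(2m,m)` as a complex number. -/
noncomputable def bml (m l : ℕ) : ℂ :=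
  ((m.choose l : ℂ)) ^ 2 / ((2 * m).choose m : ℂ)

lemma parallelogram_c (z : ℂ) :
    (‖1+z‖)^2 + (‖1-z‖)^2 = 2 + 2*(‖z‖)^2 := by
  rw [Complex.sq_norm, Complex.sq_norm, Complex.sq_norm]
  simp [Complex.normSq_apply, Complex.add_re, Complex.add_im, Complex.sub_re, Complex.sub_im]
  ring

lemma core_ineq (s a bq X : ℝ) (hs0 : 0 < s) (hs1 : s ≤ 1/2048)
    (ha0 : 0 ≤ a) (ha1 : a ≤ 1 - 12*s) (hbq : bq ≤ (1+X)/2 - a^2) (hbq0 : 0 ≤ bq)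
    (hX : X*(1-s)^2 ≤ (1+s)^2) (hX0 : 0 ≤ X) :
    a*(1-s) + bq/3 ≤ (1-s)^2 := by
  nlinarith [sq_nonneg (a - (1-12*s)), sq_nonneg s, mul_nonneg hs0.le hs0.le,
    mul_nonneg (mul_nonneg hs0.le hs0.le) hs0.le, sq_nonneg (1-s), sq_nonneg a,
    mul_nonneg ha0 hs0.le]

lemma KL (k j : ℕ) : ((k+1).choose (j+2) * (k+1).choose (j+1) : ℤ)
    = (k+1) * ((k.choose (j+1) : ℤ)^2 - k.choose (j+2) * k.choose j) := by
  rcases lt_or_ge j k with h | h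
  · have hj1 : j + 1 ≤ k := h
    have h1 := Nat.add_one_mul_choose_eq k (j+1)
    have h2 := Nat.choose_mul_succ_eq k (j+1)
    have h3 := Nat.choose_succ_right_eq k (j+1)
    have h4 := Nat.choose_succ_right_eq k j
    have h1c : ((k:ℤ)+1) * k.choose (j+1) = (k+1).choose (j+2) * ((j:ℤ)+2) := by
      exact_mod_cast h1
    have h2c : (k.choose (j+1) : ℤ) * ((k:ℤ)+1) = (k+1).choose (j+1) * ((k:ℤ)-j) := by
      have : ((k + 1 - (j+1) : ℕ) : ℤ) = (k:ℤ) - j := by omega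
      rw [← this]; exact_mod_cast h2
    have h3c : (k.choose (j+2) : ℤ) * ((j:ℤ)+2) = k.choose (j+1) * ((k:ℤ)-j-1) := by
      have : ((k - (j+1) : ℕ) : ℤ) = (k:ℤ) - j - 1 := by omega
      rw [← this]; exact_mod_cast h3
    have h4c : (k.choose (j+1) : ℤ) * ((j:ℤ)+1) = k.choose j * ((k:ℤ)-j) := by
      have : ((k - j : ℕ) : ℤ) = (k:ℤ) - j := by omega
      rw [← this]; exact_mod_cast h4
    have hne : (((j:ℤ)+2) * ((k:ℤ)-j)) ≠ 0 := by
      have : (0:ℤ) < ((j:ℤ)+2) * ((k:ℤ)-j) := by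
        apply mul_pos <;> [positivity; omega]
      exact this.ne'
    apply mul_right_cancel₀ hne
    set C1 := ((k+1).choose (j+2) : ℤ)
    set C2 := ((k+1).choose (j+1) : ℤ)
    set a := (k.choose (j+2) : ℤ)
    set b := (k.choose (j+1) : ℤ)
    set c := (k.choose j : ℤ)
    linear_combination (-(C2*((k:ℤ)-j))) * h1c + (-(((k:ℤ)+1)*b)) * h2c
      + (((k:ℤ)+1)*c*((k:ℤ)-j)) * h3c + (-(((k:ℤ)+1)*b*((k:ℤ)-j-1))) * h4c
  · have e1 : k.choose (j+1) = 0 := Nat.choose_eq_zero_of_lt (by omega)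
    have e2 : k.choose (j+2) = 0 := Nat.choose_eq_zero_of_lt (by omega)
    have e3 : (k+1).choose (j+2) = 0 := Nat.choose_eq_zero_of_lt (by omega)
    simp [e1, e2, e3]
noncomputable def S (r : ℕ) (x : ℂ) : ℂ := ∑ l ∈ Finset.range (r+1), ((r.choose l : ℂ))^2 * x^l

def sh (f : ℕ → ℂ) : ℕ → ℂ := fun l => match l with | 0 => 0 | (l+1) => f l

lemma pad (r N : ℕ) (h : r + 1 ≤ N) (x : ℂ) :
    S r x = ∑ l ∈ Finset.range N, ((r.choose l : ℂ))^2 * x^l := by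
  unfold S
  apply Finset.sum_subset (Finset.range_subset_range.mpr h)
  intro l _ hl
  have : r < l := by simp at hl; omega
  simp [Nat.choose_eq_zero_of_lt this]

lemma shift1 (f : ℕ → ℂ) (N : ℕ) (hN : f N = 0) (x : ℂ) :
    x * ∑ l ∈ Finset.range (N+1), f l * x^l = ∑ l ∈ Finset.range (N+1), sh f l * x^l := by
  rw [Finset.mul_sum, Finset.sum_range_succ, hN, Finset.sum_range_succ' (fun l => sh f l * x^l) N]
  simp only [sh, pow_zero, mul_zero, zero_mul, add_zero]
  apply Finset.sum_congr rfl; intro l _; ring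

lemma coeff_id (k j : ℕ) :
    ((k:ℂ)+2) * (((k+2).choose (j+2) : ℂ))^2
      = (2*(k:ℂ)+3) * ((((k+1).choose (j+2) : ℂ))^2 + (((k+1).choose (j+1) : ℂ))^2)
        - ((k:ℂ)+1) * (((k.choose (j+2) : ℂ))^2 - 2*((k.choose (j+1) : ℂ))^2 + ((k.choose j : ℂ))^2) := by
  have hp1 : ((k+1).choose (j+2) : ℂ) = (k.choose (j+1) : ℂ) + (k.choose (j+2) : ℂ) := by
    rw [Nat.choose_succ_succ k (j+1)]; push_cast; ring
  have hp2 : ((k+1).choose (j+1) : ℂ) = (k.choose j : ℂ) + (k.choose (j+1) : ℂ) := by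
    rw [Nat.choose_succ_succ k j]; push_cast; ring
  have hp3 : ((k+2).choose (j+2) : ℂ) = ((k+1).choose (j+1) : ℂ) + ((k+1).choose (j+2) : ℂ) := by
    rw [Nat.choose_succ_succ (k+1) (j+1)]; push_cast; ring
  have hkl : (((k+1).choose (j+2) : ℂ)) * (((k+1).choose (j+1) : ℂ))
      = ((k:ℂ)+1) * (((k.choose (j+1) : ℂ))^2 - (k.choose (j+2) : ℂ) * (k.choose j : ℂ)) := by
    have := KL k j
    have h2 : (((k+1).choose (j+2) * (k+1).choose (j+1) : ℤ) : ℂ)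
        = (((k+1 : ℤ) * ((k.choose (j+1) : ℤ)^2 - k.choose (j+2) * k.choose j) : ℤ) : ℂ) := by
      exact_mod_cast congrArg (Int.cast : ℤ → ℂ) this
    push_cast at h2
    convert h2 using 2 <;> push_cast <;> ring
  rw [hp3, hp1, hp2] at *
  linear_combination (2:ℂ) * hkl

lemma Rrec (k : ℕ) (x : ℂ) :
    ((k:ℂ)+2) * S (k+2) x
      = (2*(k:ℂ)+3) * ((1+x) * S (k+1) x) - ((k:ℂ)+1) * ((1-x)^2 * S k x) := by
  classical
  set c0 : ℕ → ℂ := fun l => ((k.choose l : ℂ))^2 with hc0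
  set c1 : ℕ → ℂ := fun l => (((k+1).choose l : ℂ))^2 with hc1
  set c2 : ℕ → ℂ := fun l => (((k+2).choose l : ℂ))^2 with hc2
  have p0 : S k x = ∑ l ∈ Finset.range (k+4+1), c0 l * x^l := pad k (k+4+1) (by omega) x
  have p1 : S (k+1) x = ∑ l ∈ Finset.range (k+4+1), c1 l * x^l := pad (k+1) (k+4+1) (by omega) x
  have p2 : S (k+2) x = ∑ l ∈ Finset.range (k+4+1), c2 l * x^l := pad (k+2) (k+4+1) (by omega) x
  have z0 : c0 (k+4) = 0 := by simp [hc0, Nat.choose_eq_zero_of_lt]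
  have z0' : sh c0 (k+4) = 0 := by simp [sh, hc0, Nat.choose_eq_zero_of_lt]
  have z1 : c1 (k+4) = 0 := by simp [hc1, Nat.choose_eq_zero_of_lt]
  have s0 := shift1 c0 (k+4) z0 x
  have s00 := shift1 (sh c0) (k+4) z0' x
  have s1 := shift1 c1 (k+4) z1 x
  have h1 : (1+x) * S (k+1) x
      = ∑ l ∈ Finset.range (k+4+1), (c1 l + sh c1 l) * x^l := by
    rw [p1, add_mul, one_mul, s1, ← Finset.sum_add_distrib]
    apply Finset.sum_congr rfl; intro l _; ring
  have h0 : (1-x)^2 * S k x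
      = ∑ l ∈ Finset.range (k+4+1), (c0 l - 2 * sh c0 l + sh (sh c0) l) * x^l := by
    have e : (1-x)^2 * S k x = S k x - 2*(x * S k x) + x * (x * S k x) := by ring
    rw [e, p0, s0, s00, Finset.mul_sum, ← Finset.sum_sub_distrib, ← Finset.sum_add_distrib]
    apply Finset.sum_congr rfl; intro l _; ring
  rw [p2, h1, h0, Finset.mul_sum, Finset.mul_sum, Finset.mul_sum, ← Finset.sum_sub_distrib]
  apply Finset.sum_congr rfl
  intro l _
  have main : ((k:ℂ)+2) * c2 l
      = (2*(k:ℂ)+3) * ((c1 l + sh c1 l)) - ((k:ℂ)+1) * ((c0 l - 2 * sh c0 l + sh (sh c0) l)) := by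
    match l with
    | 0 => simp [hc0, hc1, hc2, sh]; ring
    | 1 =>
      simp only [hc0, hc1, hc2, sh, Nat.choose_one_right, Nat.choose_zero_right]
      push_cast; ring
    | (j+2) =>
      simp only [hc0, hc1, hc2, sh]
      have := coeff_id k j
      linear_combination this
  calc ((k:ℂ)+2) * (c2 l * x^l) = (((k:ℂ)+2) * c2 l) * x^l := by ring
    _ = ((2*(k:ℂ)+3) * ((c1 l + sh c1 l)) - ((k:ℂ)+1) * ((c0 l - 2 * sh c0 l + sh (sh c0) l))) * x^l := by rw [main]
    _ = _ := by ring

lemma abs_of_root {n : ℕ} (hn : 1 ≤ n) {w : ℂ} (hw : w ^ n = 1) : ‖w‖ = 1 := by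
  have h1 : (‖w‖) ^ n = 1 := by rw [← norm_pow, hw, norm_one]
  rcases lt_trichotomy (‖w‖) 1 with h | h | h
  · have := pow_lt_one₀ (norm_nonneg w) h (show n ≠ 0 by omega); linarith
  · exact h
  · have := one_lt_pow₀ h (show n ≠ 0 by omega); linarith

lemma abs_one_sub_root (n : ℕ) (hn : 1 ≤ n) (w : ℂ) (hw : w ^ n = 1) (hw1 : w ≠ 1) :
    1 / (n:ℝ)^2 ≤ ‖1 - w‖ := by
  have habs : ‖w‖ = 1 := abs_of_root hn hw
  have hgeom : ∑ k ∈ Finset.range n, w ^ k = 0 := by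
    rw [geom_sum_eq hw1, hw]; simp
  have hsum : ∑ k ∈ Finset.range n, (1 - w ^ k) = (n : ℂ) := by
    rw [Finset.sum_sub_distrib, hgeom]; simp
  have hterm : ∀ k : ℕ, ‖1 - w ^ k‖ ≤ (k : ℝ) * ‖1 - w‖ := by
    intro k
    have e : 1 - w ^ k = (∑ i ∈ Finset.range k, w ^ i) * (1 - w) := by
      have := geom_sum_mul w k
      linear_combination this
    rw [e, norm_mul]
    have hfac : ‖∑ i ∈ Finset.range k, w ^ i‖ ≤ (k:ℝ) := by
      calc ‖∑ i ∈ Finset.range k, w ^ i‖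
          ≤ ∑ i ∈ Finset.range k, ‖w ^ i‖ := norm_sum_le _ _
        _ = k := by simp [norm_pow, habs]
    exact mul_le_mul_of_nonneg_right hfac (norm_nonneg _)
  have hn' : (n : ℝ) ≤ (n:ℝ)^2 * ‖1 - w‖ := by
    calc (n:ℝ) = ‖((n:ℕ) : ℂ)‖ := (Complex.norm_natCast n).symm
      _ = ‖∑ k ∈ Finset.range n, (1 - w ^ k)‖ := by rw [hsum]
      _ ≤ ∑ k ∈ Finset.range n, ‖1 - w ^ k‖ := norm_sum_le _ _
      _ ≤ ∑ k ∈ Finset.range n, (k : ℝ) * ‖1 - w‖ := by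
          apply Finset.sum_le_sum; intro k _; exact hterm k
      _ ≤ ∑ k ∈ Finset.range n, (n : ℝ) * ‖1 - w‖ := by
          apply Finset.sum_le_sum; intro k hk
          have hkn : (k:ℝ) ≤ n := by exact_mod_cast (Finset.mem_range.mp hk).le
          nlinarith [norm_nonneg (1-w)]
      _ = (n:ℝ) * ((n:ℝ) * ‖1 - w‖) := by
          rw [Finset.sum_const, Finset.card_range]; simp
      _ = (n:ℝ)^2 * ‖1 - w‖ := by ring
  have h1n : (1:ℝ) ≤ n := by exact_mod_cast hn
  rw [div_le_iff₀ (by positivity)]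
  nlinarith
lemma Sbound (x : ℂ) (a bq ρ : ℝ) (hbq0 : 0 ≤ bq) (hρ0 : 0 < ρ) (ha0 : 0 ≤ a) (haρ : a ≤ ρ)
    (hA : ‖1+x‖ ≤ 2*a) (hB : (‖1-x‖)^2 ≤ 4*bq)
    (hcore : a*ρ + bq/3 ≤ ρ^2) :
    ∀ m : ℕ, ‖S m x‖ ≤ ρ^m * (((2*m).choose m : ℕ) : ℝ) := by
  have key : ∀ k : ℕ, (‖S k x‖ ≤ ρ^k * (((2*k).choose k : ℕ) : ℝ)) ∧
      (‖S (k+1) x‖ ≤ ρ^(k+1) * (((2*(k+1)).choose (k+1) : ℕ) : ℝ)) := by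
    intro k
    induction k with
    | zero =>
      constructor
      · have h : S 0 x = 1 := by norm_num [S]
        rw [h]; norm_num
      · have h : S (0+1) x = 1 + x := by norm_num [S, Finset.sum_range_succ]
        rw [h]
        have e : (((2*(0+1)).choose (0+1) : ℕ) : ℝ) = 2 := by norm_num
        rw [e]
        calc ‖1+x‖ ≤ 2*a := hA
          _ ≤ ρ^(0+1) * 2 := by rw [pow_one]; linarith
    | succ k ih =>
      refine ⟨ih.2, ?_⟩
      set c0 : ℝ := (((2*k).choose k : ℕ) : ℝ) with hc0
      set c1 : ℝ := (((2*(k+1)).choose (k+1) : ℕ) : ℝ) with hc1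
      set c2 : ℝ := (((2*(k+2)).choose (k+2) : ℕ) : ℝ) with hc2
      have hc0pos : (0:ℝ) < c0 := by
        rw [hc0]; exact_mod_cast Nat.choose_pos (by omega)
      have hc1pos : (0:ℝ) < c1 := by
        rw [hc1]; exact_mod_cast Nat.choose_pos (by omega)
      have rel1 : ((k:ℝ)+1) * c1 = 2*(2*(k:ℝ)+1) * c0 := by
        have h := Nat.succ_mul_centralBinom_succ k
        rw [Nat.centralBinom_eq_two_mul_choose, Nat.centralBinom_eq_two_mul_choose] at h
        rw [hc1, hc0]
        have h' := congrArg (Nat.cast : ℕ → ℝ) h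
        push_cast at h'
        linarith [h']
      have rel2 : ((k:ℝ)+2) * c2 = 2*(2*(k:ℝ)+3) * c1 := by
        have h := Nat.succ_mul_centralBinom_succ (k+1)
        rw [Nat.centralBinom_eq_two_mul_choose, Nat.centralBinom_eq_two_mul_choose] at h
        rw [hc2, hc1]
        have h' := congrArg (Nat.cast : ℕ → ℝ) h
        push_cast at h'
        linarith [h']
      clear_value c0 c1 c2
      have habs2 : ‖((k:ℂ)+2) * S (k+2) x‖ = ((k:ℝ)+2) * ‖S (k+2) x‖ := by
        rw [norm_mul]
        congr 1
        have e : ((k:ℂ)+2) = (((k+2 : ℕ)) : ℂ) := by push_cast; ring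
        rw [e, Complex.norm_natCast]; push_cast; ring
      have tineq : ((k:ℝ)+2) * ‖S (k+2) x‖
          ≤ (2*(k:ℝ)+3) * (‖1+x‖ * ‖S (k+1) x‖)
            + ((k:ℝ)+1) * ((‖1-x‖)^2 * ‖S k x‖) := by
        rw [← habs2, Rrec k x]
        calc ‖(2*(k:ℂ)+3) * ((1+x) * S (k+1) x) - ((k:ℂ)+1) * ((1-x)^2 * S k x)‖
            ≤ ‖(2*(k:ℂ)+3) * ((1+x) * S (k+1) x)‖
              + ‖((k:ℂ)+1) * ((1-x)^2 * S k x)‖ :=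
              norm_sub_le _ _
          _ = (2*(k:ℝ)+3) * (‖1+x‖ * ‖S (k+1) x‖)
              + ((k:ℝ)+1) * ((‖1-x‖)^2 * ‖S k x‖) := by
              rw [norm_mul, norm_mul, norm_mul, norm_mul, norm_pow]
              congr 2
              · have e : (2*(k:ℂ)+3) = (((2*k+3 : ℕ)) : ℂ) := by push_cast; ring
                rw [e, Complex.norm_natCast]; push_cast; ring
              · have e : ((k:ℂ)+1) = (((k+1 : ℕ)) : ℂ) := by push_cast; ring
                rw [e, Complex.norm_natCast]; push_cast; ring
      have hS1 := ih.2
      have hS0 := ih.1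
      have hPk : (0:ℝ) ≤ ρ^k := le_of_lt (pow_pos hρ0 k)
      have hP1 : (0:ℝ) ≤ ρ^(k+1) := le_of_lt (pow_pos hρ0 (k+1))
      have hup : ((k:ℝ)+2) * ‖S (k+2) x‖
          ≤ (2*(k:ℝ)+3) * ((2*a) * (ρ^(k+1) * c1)) + ((k:ℝ)+1) * ((4*bq) * (ρ^k * c0)) := by
        refine le_trans tineq ?_
        have t1 : ‖1+x‖ * ‖S (k+1) x‖ ≤ (2*a) * (ρ^(k+1) * c1) :=
          mul_le_mul hA hS1 (norm_nonneg _) (by linarith)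
        have t2 : (‖1-x‖)^2 * ‖S k x‖ ≤ (4*bq) * (ρ^k * c0) :=
          mul_le_mul hB hS0 (norm_nonneg _) (by linarith)
        have hk2 : (0:ℝ) ≤ 2*(k:ℝ)+3 := by positivity
        have hk1 : (0:ℝ) ≤ (k:ℝ)+1 := by positivity
        exact add_le_add (mul_le_mul_of_nonneg_left t1 hk2) (mul_le_mul_of_nonneg_left t2 hk1)
      have hfrac : 3*((k:ℝ)+1)^2 ≤ (2*(k:ℝ)+1)*(2*(k:ℝ)+3) := by nlinarith [sq_nonneg (k:ℝ)]
      have hcoreP : (a*ρ)*ρ^k + (bq/3)*ρ^k ≤ ρ^2*ρ^k := by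
        nlinarith [mul_le_mul_of_nonneg_right hcore hPk]
      have hq : (0:ℝ) ≤ 2*(2*(k:ℝ)+1)*(2*(k:ℝ)+3)*c1 := by positivity
      have hs : (0:ℝ) ≤ (2/3)*bq*ρ^k*c1 := by positivity
      have F1 := mul_le_mul_of_nonneg_left hcoreP hq
      have F2 := mul_le_mul_of_nonneg_right hfrac hs
      have goal2 : (2*(k:ℝ)+3) * ((2*a) * (ρ^(k+1) * c1)) + ((k:ℝ)+1) * ((4*bq) * (ρ^k * c0))
          ≤ ((k:ℝ)+2) * (ρ^(k+2) * c2) := by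
        have hmul : (0:ℝ) < 2*(k:ℝ)+1 := by positivity
        rw [← mul_le_mul_iff_of_pos_left hmul]
        have sub1 : (2*(k:ℝ)+1)*(((k:ℝ)+1) * ((4*bq) * (ρ^k * c0)))
            = 2*bq*ρ^k*((k:ℝ)+1)^2*c1 := by
          linear_combination (-(2*bq*ρ^k*((k:ℝ)+1))) * rel1
        have sub2 : (2*(k:ℝ)+1)*(((k:ℝ)+2) * (ρ^(k+2) * c2))
            = 2*(2*(k:ℝ)+1)*(2*(k:ℝ)+3)*(ρ^2*ρ^k)*c1 := by
          have e2 : ρ^(k+2) = ρ^k * ρ^2 := by rw [pow_add]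
          rw [e2]
          linear_combination ((2*(k:ℝ)+1)*(ρ^k*ρ^2)) * rel2
        have e1 : ρ^(k+1) = ρ^k * ρ := pow_succ ρ k
        rw [mul_add, sub1, sub2, e1]
        nlinarith [F1, F2]
      exact le_of_mul_le_mul_left (le_trans hup goal2) (by positivity : (0:ℝ) < (k:ℝ)+2)
  intro m
  exact (key m).1

theorem stmt_9 (n : ℕ) (hn : 2 ≤ n) :
    ∃ r₁ ρ₆ : ℝ, 0 < r₁ ∧ r₁ < 1 ∧ 0 < ρ₆ ∧ ρ₆ < 1 ∧
      ∀ m : ℕ, 1 ≤ m → ∀ ζ ζ' : ℂ, ζ ^ n = 1 → ζ' ^ n = 1 → ζ ≠ ζ' →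
        ∀ u t : ℂ, ‖u - ζ‖ < r₁ → ‖t - ζ'‖ < r₁ →
          ‖t - u‖ ≤ 2 * ‖1 + (starRingEnd ℂ) u * t‖ →
          ‖∑ l ∈ Finset.range (m + 1), bml m l * u⁻¹ ^ l * t ^ l‖ < ρ₆ ^ m := by
  obtain ⟨η, hηdef⟩ : ∃ η : ℝ, η = 1/(4*(n:ℝ)^4) := ⟨_, rfl⟩
  have hn2 : (2:ℝ) ≤ (n:ℝ) := by exact_mod_cast hn
  have hnpos : (0:ℝ) < (n:ℝ) := by linarith
  have hη0 : 0 < η := by rw [hηdef]; positivity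
  have hη64 : η ≤ 1/64 := by
    rw [hηdef]
    rw [div_le_div_iff₀ (by positivity) (by norm_num)]
    nlinarith [sq_nonneg ((n:ℝ)-2), sq_nonneg ((n:ℝ)^2-4)]
  refine ⟨η/32, 1 - η/64, by positivity, by linarith, by linarith, by linarith, ?_⟩
  intro m hm ζ ζ' hζn hζ'n hne u t hu ht _htu
  have absζ : ‖ζ‖ = 1 := abs_of_root (by omega) hζn
  have absζ' : ‖ζ'‖ = 1 := abs_of_root (by omega) hζ'n
  have hζ0 : ζ ≠ 0 := by
    intro h; rw [h] at absζ; simp at absζ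
  -- the ratio of the two roots of unity
  set w : ℂ := ζ⁻¹ * ζ' with hwdef
  have hwn : w ^ n = 1 := by
    rw [hwdef, mul_pow, inv_pow, hζn, hζ'n, inv_one, one_mul]
  have hw1 : w ≠ 1 := by
    rw [hwdef]
    intro h
    apply hne
    field_simp at h
    exact h.symm
  have habsw : ‖w‖ = 1 := abs_of_root (by omega) hwn
  have h1w : 1/(n:ℝ)^2 ≤ ‖1 - w‖ := abs_one_sub_root n (by omega) w hwn hw1
  have hpw := parallelogram_c w
  have h1pw : ‖1 + w‖ ≤ 2 - η := by
    have h1 : (‖1+w‖)^2 ≤ 4 - 1/(n:ℝ)^4 := by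
      have hsq : (1/(n:ℝ)^2)^2 ≤ (‖1-w‖)^2 :=
        pow_le_pow_left₀ (by positivity) h1w 2
      rw [habsw] at hpw
      have e : (1/(n:ℝ)^2)^2 = 1/(n:ℝ)^4 := by field_simp
      nlinarith [hsq, hpw]
    have h4η : 1/(n:ℝ)^4 = 4*η := by rw [hηdef]; field_simp
    nlinarith [norm_nonneg (1+w), hη0, hη64]
  have hζζ' : ‖ζ + ζ'‖ ≤ 2 - η := by
    have e : ζ * (1 + w) = ζ + ζ' := by
      rw [hwdef]; field_simp
    calc ‖ζ + ζ'‖ = ‖ζ * (1+w)‖ := by rw [e]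
      _ = ‖ζ‖ * ‖1+w‖ := norm_mul _ _
      _ = ‖1+w‖ := by rw [absζ, one_mul]
      _ ≤ 2 - η := h1pw
  -- bounds on u and t
  have hu_abs : 1 - η/32 ≤ ‖u‖ := by
    have htri : ‖ζ‖ ≤ ‖u‖ + ‖u - ζ‖ := by
      calc ‖ζ‖ = ‖u + (ζ - u)‖ := by ring_nf
        _ ≤ ‖u‖ + ‖ζ - u‖ := norm_add_le _ _
        _ = ‖u‖ + ‖u - ζ‖ := by rw [norm_sub_rev]
    rw [absζ] at htri
    linarith
  have hupos : (0:ℝ) < ‖u‖ := by linarith [hη64]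
  have hune : u ≠ 0 := by
    intro h; rw [h] at hupos; simp at hupos
  have ht_abs : ‖t‖ ≤ 1 + η/32 := by
    have htri : ‖t‖ ≤ ‖ζ'‖ + ‖t - ζ'‖ := by
      calc ‖t‖ = ‖ζ' + (t - ζ')‖ := by ring_nf
        _ ≤ ‖ζ'‖ + ‖t - ζ'‖ := norm_add_le _ _
    rw [absζ'] at htri
    linarith
  have hut : ‖u + t‖ ≤ (2 - η) + 2*(η/32) := by
    have e : u + t = (ζ + ζ') + ((u - ζ) + (t - ζ')) := by ring
    calc ‖u+t‖ = ‖(ζ + ζ') + ((u - ζ) + (t - ζ'))‖ := by rw [← e]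
      _ ≤ ‖ζ + ζ'‖ + ‖(u - ζ) + (t - ζ')‖ := norm_add_le _ _
      _ ≤ ‖ζ + ζ'‖ + (‖u - ζ‖ + ‖t - ζ'‖) := by
          linarith [norm_add_le (u - ζ) (t - ζ')]
      _ ≤ (2 - η) + 2*(η/32) := by linarith
  -- the ratio x
  set x : ℂ := u⁻¹ * t with hxdef
  have h1x_mul : ‖1+x‖ * ‖u‖ = ‖u+t‖ := by
    rw [← norm_mul]
    congr 1
    rw [hxdef]; field_simp
  have hx_mul : ‖x‖ * ‖u‖ = ‖t‖ := by
    rw [← norm_mul]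
    congr 1
    rw [hxdef]; field_simp
  set a : ℝ := ‖1+x‖ / 2 with hadef
  set bq : ℝ := (‖1-x‖)^2 / 4 with hbqdef
  have ha0 : 0 ≤ a := by rw [hadef]; positivity
  have hbq0 : 0 ≤ bq := by rw [hbqdef]; positivity
  have ha_bound : a ≤ 1 - 12*(η/32) := by
    rw [hadef]
    have h1 : ‖1+x‖ * (1 - η/32) ≤ (2 - η) + 2*(η/32) := by
      calc ‖1+x‖ * (1 - η/32) ≤ ‖1+x‖ * ‖u‖ := by
            apply mul_le_mul_of_nonneg_left hu_abs (norm_nonneg _)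
        _ = ‖u+t‖ := h1x_mul
        _ ≤ (2 - η) + 2*(η/32) := hut
    nlinarith [norm_nonneg (1+x), hη0, hη64]
  have hX : (‖x‖)^2 * (1 - η/32)^2 ≤ (1 + η/32)^2 := by
    have h1 : ‖x‖ * (1 - η/32) ≤ 1 + η/32 := by
      calc ‖x‖ * (1 - η/32) ≤ ‖x‖ * ‖u‖ := by
            apply mul_le_mul_of_nonneg_left hu_abs (norm_nonneg _)
        _ = ‖t‖ := hx_mul
        _ ≤ 1 + η/32 := ht_abs
    have h2 : (0:ℝ) ≤ ‖x‖ * (1 - η/32) := by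
      apply mul_nonneg (norm_nonneg _); linarith [hη64]
    nlinarith [h1, h2]
  have hbq_le : bq ≤ (1 + (‖x‖)^2)/2 - a^2 := by
    have := parallelogram_c x
    rw [hbqdef, hadef]
    nlinarith [this]
  have hcore : a*(1 - η/32) + bq/3 ≤ (1 - η/32)^2 :=
    core_ineq (η/32) a bq ((‖x‖)^2) (by positivity) (by linarith)
      ha0 ha_bound hbq_le hbq0 hX (by positivity)
  -- apply the inductive bound
  have hSb := Sbound x a bq (1 - η/32) hbq0 (by linarith [hη64]) ha0
    (by linarith [hη0]) (by rw [hadef]; linarith) (by rw [hbqdef]; linarith) hcore m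
  -- rewrite the sum
  have chpos : (0:ℝ) < (((2*m).choose m : ℕ) : ℝ) := by
    exact_mod_cast Nat.choose_pos (by omega)
  have hsum_eq : ∑ l ∈ Finset.range (m + 1), bml m l * u⁻¹ ^ l * t ^ l
      = S m x / (((2*m).choose m : ℕ) : ℂ) := by
    rw [S, Finset.sum_div]
    apply Finset.sum_congr rfl
    intro l _
    rw [bml, hxdef, mul_pow]
    ring
  rw [hsum_eq, norm_div, Complex.norm_natCast]
  have step1 : ‖S m x‖ / (((2*m).choose m : ℕ) : ℝ) ≤ (1 - η/32)^m := by
    rw [div_le_iff₀ chpos]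
    exact hSb
  have step2 : (1 - η/32)^m < (1 - η/64)^m := by
    apply pow_lt_pow_left₀ (by linarith) (by linarith [hη64]) (by omega)
  linarith
end
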